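/- Let G be a 2-connected planar graph embedded in the sphere and let H be a 2-connected induced subgraph of G. Let f be a face of H and let U be the set of vertices of G lying in the open interior of f. Then the induced subgraph H' = G[V(H) ∪ U] (obtained from H by filling the face f) is 2-connected. -/

import Mathlib

open Finset

/-- A plane (equivalently, sphere) embedding of the simple graph `G`: vertices are
distinct points of the plane, each edge is drawn as a simple arc between the images of
its endpoints, arcs meet vertex points only at their endpoints, and two arcs of distinct
edges meet only in common endpoints. -/
structure PlaneEmbedding {V : Type} (G : SimpleGraph V) where
  pos : V → ℝ × ℝ
  inj : Function.Injective pos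
  arc : ∀ u v, G.Adj u v → Path (pos u) (pos v)
  arc_inj : ∀ u v (h : G.Adj u v), Function.Injective ⇑(arc u v h)
  arc_symm : ∀ u v (h : G.Adj u v), Set.range ⇑(arc v u h.symm) = Set.range ⇑(arc u v h)
  arc_vertex : ∀ u v (h : G.Adj u v) (w : V),
    pos w ∈ Set.range ⇑(arc u v h) → w = u ∨ w = v
  arc_disj : ∀ u v (h : G.Adj u v) u' v' (h' : G.Adj u' v'), s(u, v) ≠ s(u', v') →
    Set.range ⇑(arc u v h) ∩ Set.range ⇑(arc u' v' h') ⊆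
      ({pos u, pos v} : Set (ℝ × ℝ)) ∩ {pos u', pos v'}

/-- The drawing (point set in the plane) of the subgraph of `G` induced by `S`. -/
def drawing {V : Type} {G : SimpleGraph V} (E : PlaneEmbedding G) (S : Set V) :
    Set (ℝ × ℝ) :=
  (E.pos '' S) ∪
    ⋃ u, ⋃ v, ⋃ (_ : u ∈ S), ⋃ (_ : v ∈ S), ⋃ (h : G.Adj u v), Set.range ⇑(E.arc u v h)

/-- `f` is a face of the induced subgraph on `S` in the embedding `E`: a connected
component of the complement of its drawing. -/
def IsFaceOf {V : Type} {G : SimpleGraph V} (E : PlaneEmbedding G) (S : Set V)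
    (f : Set (ℝ × ℝ)) : Prop :=
  ∃ x ∈ (drawing E S)ᶜ, f = connectedComponentIn (drawing E S)ᶜ x

/-- The induced subgraph of `G` on `S` is 2-connected: it has at least 3 vertices and
deleting any single vertex leaves it connected. -/
def TwoConnectedOn {V : Type} (G : SimpleGraph V) (S : Set V) : Prop :=
  3 ≤ S.ncard ∧ ∀ v ∈ S, (G.induce (S \ {v})).Connected

/-- hom between induced subgraphs from subset inclusion -/
def homOfLE' {V : Type} {G : SimpleGraph V} {A B : Set V} (h : A ⊆ B) :
    G.induce A →g G.induce B :=
  ⟨fun x => ⟨x.1, h x.2⟩, fun {a b} hab => hab⟩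

lemma mem_face_of_adj {V : Type} {G : SimpleGraph V} (E : PlaneEmbedding G)
    {S : Set V} {f : Set (ℝ × ℝ)} (hf : IsFaceOf E S f) {u w : V}
    (hu : E.pos u ∈ f) (huS : u ∉ S) (hwS : w ∉ S) (h : G.Adj u w) :
    E.pos w ∈ f := by
  obtain ⟨x, hx, rfl⟩ := hf
  have hrange : Set.range ⇑(E.arc u w h) ⊆ (drawing E S)ᶜ := by
    rintro p ⟨t, rfl⟩ hp
    rcases hp with ⟨s, hsS, hps⟩ | hmem
    · rcases E.arc_vertex u w h s ⟨t, hps.symm⟩ with rfl | rfl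
      exacts [huS hsS, hwS hsS]
    · simp only [Set.mem_iUnion] at hmem
      obtain ⟨a, b, haS, hbS, h', hmem⟩ := hmem
      have hne : s(u, w) ≠ s(a, b) := by
        intro heq
        rw [Sym2.eq_iff] at heq
        rcases heq with ⟨rfl, rfl⟩ | ⟨rfl, rfl⟩
        exacts [huS haS, huS hbS]
      have hd := E.arc_disj u w h a b h' hne ⟨⟨t, rfl⟩, hmem⟩
      simp only [Set.mem_inter_iff, Set.mem_insert_iff, Set.mem_singleton_iff] at hd
      obtain ⟨h1, h2⟩ := hd
      rcases h1 with h1 | h1 <;> rcases h2 with h2 | h2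
      · exact huS (E.inj (h1.symm.trans h2) ▸ haS)
      · exact huS (E.inj (h1.symm.trans h2) ▸ hbS)
      · exact hwS (E.inj (h1.symm.trans h2) ▸ haS)
      · exact hwS (E.inj (h1.symm.trans h2) ▸ hbS)
  have hpre : IsPreconnected (Set.range ⇑(E.arc u w h)) := by
    rw [← Set.image_univ]
    exact isPreconnected_univ.image _ (E.arc u w h).continuous.continuousOn
  have hsub := hpre.subset_connectedComponentIn ⟨0, (E.arc u w h).source⟩ hrange
  rw [connectedComponentIn_eq hu]
  exact hsub ⟨1, (E.arc u w h).target⟩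

/-- let `G` be a 2-connected planar graph with a fixed embedding, `H = G[S]`
a 2-connected induced subgraph, `f` a face of `H`, and `U` the set of vertices of `G`
drawn in the interior of `f`.  Then the induced subgraph `G[S ∪ U]`, obtained by filling
the face `f`, is 2-connected. -/
theorem stmt11 {V : Type} [Fintype V] [DecidableEq V] (G : SimpleGraph V)
    (E : PlaneEmbedding G) (hG : TwoConnectedOn G Set.univ)
    (S : Set V) (hH : TwoConnectedOn G S)
    (f : Set (ℝ × ℝ)) (hf : IsFaceOf E S f) :
    TwoConnectedOn G (S ∪ {w : V | E.pos w ∈ f}) := by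
  have hSfin : S.Finite := S.toFinite
  have hfc : f ⊆ (drawing E S)ᶜ := by
    obtain ⟨x, hx, rfl⟩ := hf; exact connectedComponentIn_subset _ _
  have hUS : ∀ {u : V}, E.pos u ∈ f → u ∉ S := fun {u} hu huS =>
    hfc hu (Or.inl ⟨u, huS, rfl⟩)
  have htriple : ∃ a b c : V, a ∈ S ∧ b ∈ S ∧ c ∈ S ∧ a ≠ b ∧ a ≠ c ∧ b ≠ c := by
    have h3 := hH.1
    obtain ⟨a, ha⟩ := Set.nonempty_of_ncard_ne_zero (s := S) (by omega)
    have e1 : (S \ {a}).ncard = S.ncard - 1 := Set.ncard_diff_singleton_of_mem ha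
    obtain ⟨b, hb⟩ := Set.nonempty_of_ncard_ne_zero (s := S \ {a}) (by omega)
    have e2 : ((S \ {a}) \ {b}).ncard = (S \ {a}).ncard - 1 :=
      Set.ncard_diff_singleton_of_mem hb
    obtain ⟨c, hc⟩ := Set.nonempty_of_ncard_ne_zero (s := (S \ {a}) \ {b}) (by omega)
    refine ⟨a, b, c, ha, hb.1, hc.1.1, ?_, ?_, ?_⟩
    · exact fun h => hb.2 (by simp [h.symm])
    · exact fun h => hc.1.2 (by simp [h.symm])
    · exact fun h => hc.2 (by simp [h.symm])
  have Sconn : ∀ v' : V, (G.induce (S \ {v'})).Connected := by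
    intro v'
    by_cases hv' : v' ∈ S
    · exact hH.2 v' hv'
    · rw [Set.diff_singleton_eq_self hv']
      obtain ⟨a, b, c, ha, hb, hc, hab, hac, hbc⟩ := htriple
      have reach : ∀ z (hz : z ∈ S), (G.induce S).Reachable ⟨z, hz⟩ ⟨c, hc⟩ := by
        intro z hz
        by_cases hza : z = a
        · have hzb : z ≠ b := by rw [hza]; exact hab
          have r := (hH.2 b hb).preconnected ⟨z, ⟨hz, by simp [hzb]⟩⟩
            ⟨c, ⟨hc, by simp [hbc.symm]⟩⟩
          exact r.map (homOfLE' Set.diff_subset)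
        · have r := (hH.2 a ha).preconnected ⟨z, ⟨hz, by simp [hza]⟩⟩
            ⟨c, ⟨hc, by simp [hac.symm]⟩⟩
          exact r.map (homOfLE' Set.diff_subset)
      haveI : Nonempty ↑S := ⟨⟨c, hc⟩⟩
      exact SimpleGraph.Connected.mk fun x y => (reach x.1 x.2).trans (reach y.1 y.2).symm
  constructor
  · exact le_trans hH.1 (Set.ncard_le_ncard Set.subset_union_left (Set.toFinite _))
  · intro v hv
    obtain ⟨s0, hs0S, hs0v⟩ : ∃ s0 ∈ S, s0 ≠ v := by
      by_contra hcon
      push_neg at hcon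
      have hsub : S ⊆ {v} := fun s hs => hcon s hs
      have := Set.ncard_le_ncard hsub (Set.finite_singleton v)
      rw [Set.ncard_singleton] at this
      have h3 := hH.1
      omega
    have hs0T : s0 ∈ (S ∪ {w : V | E.pos w ∈ f}) \ {v} := ⟨Or.inl hs0S, by simp [hs0v]⟩
    have key : ∀ (a b : ↥(Set.univ \ {v} : Set V))
        (p : (G.induce (Set.univ \ {v})).Walk a b),
        E.pos a.1 ∈ f → b.1 ∈ S →
        ∃ (ha' : a.1 ∈ (S ∪ {w : V | E.pos w ∈ f}) \ {v}) (s : V) (_ : s ∈ S)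
          (hs' : s ∈ (S ∪ {w : V | E.pos w ∈ f}) \ {v}),
          (G.induce ((S ∪ {w : V | E.pos w ∈ f}) \ {v})).Reachable ⟨a.1, ha'⟩ ⟨s, hs'⟩ := by
      intro a b p
      induction p with
      | nil => intro haU hbS; exact absurd hbS (hUS haU)
      | @cons x y z h q ih =>
        intro haU hbS
        have hGadj : G.Adj x.1 y.1 := h
        have hx' : x.1 ∈ (S ∪ {w : V | E.pos w ∈ f}) \ {v} := ⟨Or.inr haU, x.2.2⟩
        by_cases hyS : y.1 ∈ S
        · refine ⟨hx', y.1, hyS, ⟨Or.inl hyS, y.2.2⟩, SimpleGraph.Adj.reachable ?_⟩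
          exact hGadj
        · have hyU : E.pos y.1 ∈ f := mem_face_of_adj E hf haU (hUS haU) hyS hGadj
          obtain ⟨hy', s, hsS, hs', hr⟩ := ih hyU hbS
          refine ⟨hx', s, hsS, hs', SimpleGraph.Reachable.trans
            (SimpleGraph.Adj.reachable (show (G.induce _).Adj ⟨x.1, hx'⟩
              ⟨y.1, ⟨Or.inr hyU, y.2.2⟩⟩ from hGadj)) hr⟩
    have hmap : ∀ {p q : V} (hp : p ∈ S \ {v}) (hq : q ∈ S \ {v}),
        (G.induce ((S ∪ {w : V | E.pos w ∈ f}) \ {v})).Reachable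
          ⟨p, ⟨Or.inl hp.1, hp.2⟩⟩ ⟨q, ⟨Or.inl hq.1, hq.2⟩⟩ := by
      intro p q hp hq
      exact ((Sconn v).preconnected ⟨p, hp⟩ ⟨q, hq⟩).map
        (homOfLE' (Set.diff_subset_diff_left Set.subset_union_left))
    have reachAll : ∀ (z : V) (hz : z ∈ (S ∪ {w : V | E.pos w ∈ f}) \ {v}),
        (G.induce ((S ∪ {w : V | E.pos w ∈ f}) \ {v})).Reachable ⟨z, hz⟩ ⟨s0, hs0T⟩ := by
      intro z hz
      by_cases hzS : z ∈ S
      · exact hmap ⟨hzS, hz.2⟩ ⟨hs0S, by simp [hs0v]⟩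
      · have hzU : E.pos z ∈ f := Or.resolve_left hz.1 hzS
        obtain ⟨p⟩ := (hG.2 v (Set.mem_univ v)).preconnected
          ⟨z, ⟨trivial, hz.2⟩⟩ ⟨s0, ⟨trivial, by simp [hs0v]⟩⟩
        obtain ⟨hz', s, hsS, hs', hr⟩ := key _ _ p hzU hs0S
        exact hr.trans (hmap ⟨hsS, hs'.2⟩ ⟨hs0S, by simp [hs0v]⟩)
    haveI : Nonempty ↑((S ∪ {w : V | E.pos w ∈ f}) \ {v}) := ⟨⟨s0, hs0T⟩⟩
    exact SimpleGraph.Connected.mk fun x y => (reachAll x.1 x.2).trans (reachAll y.1 y.2).symm
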